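/- Let D be a free semi-theory, P the initial semi-theory, and n, k ≥ 0. For every functor X : D → SSet, the commutative square of sets of natural transformations with top row Hom_D(D̄_n^{k+1}, X) → Hom_D(D̄_n^k, X), bottom row Hom_P(sD̄_n^{k+1}, X) → Hom_P(D̄_n^k, X) (all maps induced by the inclusions of subdiagrams and by restriction along P → D) is a pullback square of sets. -/

import Mathlib

open CategoryTheory Limits Topology Topology.Homotopy

noncomputable section

namespace SemiThPaper

/-! ### Weak homotopy equivalences -/

/-- The map induced by a continuous map on homotopy "groups" (sets for `N = Fin 0`). -/
def HomotopyGroup.map {X Y : Type} [TopologicalSpace X] [TopologicalSpace Y]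
    (f : C(X, Y)) (N : Type) (x : X) :
    HomotopyGroup N X x → HomotopyGroup N Y (f x) :=
  Quotient.map
    (fun g => ⟨f.comp g.1, fun y hy => by
      simp only [ContinuousMap.comp_apply]
      rw [g.2 y hy]⟩)
    (fun g h H => H.elim fun H => ⟨H.compContinuousMap f⟩)

/-- The map induced on path components. -/
def ZerothHomotopy.map {X Y : Type} [TopologicalSpace X] [TopologicalSpace Y]
    (f : C(X, Y)) : ZerothHomotopy X → ZerothHomotopy Y :=
  Quotient.map f (fun _ _ h => h.elim fun γ => ⟨γ.map f.continuous⟩)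

/-- A weak homotopy equivalence of topological spaces: a continuous map inducing a
bijection on path components and on all homotopy groups at all basepoints. -/
def IsWeakHomotopyEquiv {X Y : TopCat} (f : X ⟶ Y) : Prop :=
  Function.Bijective (ZerothHomotopy.map (f.hom : C(X, Y))) ∧
    ∀ (n : ℕ) (x : X), Function.Bijective (HomotopyGroup.map (f.hom : C(X, Y)) (Fin n) x)

/-- A weak equivalence of simplicial sets: a map whose geometric realization is a
weak homotopy equivalence. -/
def WeakEquiv {A B : SSet} (f : A ⟶ B) : Prop :=
  IsWeakHomotopyEquiv (SSet.toTop.map f)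


/-! ### Semi-theories -/

/-- The objects `[1], [2], [3], …` of a semi-theory, indexed by positive integers. -/
@[ext]
structure Ob : Type where
  val : ℕ+

instance : Coe ℕ+ Ob := ⟨Ob.mk⟩

/-- An (unpointed) semi-theory: a category with objects `[1], [2], …`
together with distinguished projection morphisms `p^n_k : [n] ⟶ [1]`, where `p^1_1 = 𝟙 [1]`. -/
structure SemiTheory : Type 1 where
  cat : Category.{0, 0} Ob
  proj : ∀ n : ℕ+, Fin n → @Quiver.Hom Ob cat.toCategoryStruct.toQuiver ⟨n⟩ ⟨1⟩
  proj_one : proj 1 ⟨0, Nat.one_pos⟩ = cat.toCategoryStruct.id ⟨1⟩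

/-- The category of diagrams of simplicial sets over (the underlying category of)
a semi-theory. -/
abbrev SemiTheory.Diag (S : SemiTheory) : Type 1 :=
  @CategoryTheory.Functor Ob S.cat SSet _

/-- The `n`-fold levelwise power of a simplicial set. -/
@[simps]
def finPow (n : ℕ+) (A : SSet) : SSet where
  obj m := Fin n → A.obj m
  map θ := TypeCat.ofHom fun a k => A.map θ (a k)

/-- The canonical comparison map `X[n] ⟶ X[1]^n` of a diagram over a semi-theory,
whose components are induced by the projections. -/
def SemiTheory.projFan (S : SemiTheory) (X : S.Diag) (n : ℕ+) :
    (letI := S.cat; (X.obj ⟨n⟩ ⟶ finPow n (X.obj ⟨1⟩))) :=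
  letI := S.cat
  { app := fun m => TypeCat.ofHom fun a k => (X.map (S.proj n k)).app m a
    naturality := fun m m' θ => by
      ext a
      funext k
      exact types_congr_hom ((X.map (S.proj n k)).naturality θ) a }

/-- A strict algebra over a semi-theory: the comparison maps `X[n] ⟶ X[1]^n` are
isomorphisms for all `n > 1`. -/
def SemiTheory.IsStrictAlgebra (S : SemiTheory) (X : S.Diag) : Prop :=
  ∀ n : ℕ+, 1 < (n : ℕ) → IsIso (S.projFan X n)

/-- A homotopy algebra over a semi-theory: the comparison maps `X[n] ⟶ X[1]^n` are
weak equivalences of simplicial sets for all `n > 1`. -/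
def SemiTheory.IsHomotopyAlgebra (S : SemiTheory) (X : S.Diag) : Prop :=
  ∀ n : ℕ+, 1 < (n : ℕ) → WeakEquiv (S.projFan X n)

/-- A semi-theory is an algebraic theory if composition with the projections induces
bijections `Hom([m],[n]) ≅ Hom([m],[1])^n` for all `m` and all `n > 1`. -/
def SemiTheory.IsAlgebraic (S : SemiTheory) : Prop :=
  letI := S.cat
  ∀ (m n : ℕ+), 1 < (n : ℕ) →
    Function.Bijective (fun (f : (⟨m⟩ : Ob) ⟶ ⟨n⟩) (k : Fin n) => f ≫ S.proj n k)

/-- The comparison map `X[n] ⟶ X[1]^n` for a diagram of simplicial sets over any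
category equipped with objects `[n]` and projection morphisms. -/
def projFanAt {C : Type} [Category.{0} C] (o : ℕ+ → C) (p : ∀ n : ℕ+, Fin n → (o n ⟶ o 1))
    (X : C ⥤ SSet) (n : ℕ+) : X.obj (o n) ⟶ finPow n (X.obj (o 1)) where
  app m := TypeCat.ofHom fun a k => (X.map (p n k)).app m a
  naturality m m' θ := by
    ext a
    funext k
    exact types_congr_hom ((X.map (p n k)).naturality θ) a

/-- Strictness of a diagram with respect to given objects and projections. -/
def IsStrictAt {C : Type} [Category.{0} C] (o : ℕ+ → C)
    (p : ∀ n : ℕ+, Fin n → (o n ⟶ o 1)) (X : C ⥤ SSet) : Prop :=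
  ∀ n : ℕ+, 1 < (n : ℕ) → IsIso (projFanAt o p X n)

/-- The homotopy-algebra condition for a diagram with respect to given objects
and projections. -/
def IsHomotopyAt {C : Type} [Category.{0} C] (o : ℕ+ → C)
    (p : ∀ n : ℕ+, Fin n → (o n ⟶ o 1)) (X : C ⥤ SSet) : Prop :=
  ∀ n : ℕ+, 1 < (n : ℕ) → WeakEquiv (projFanAt o p X n)

/-! ### Free semi-theories -/

/-- Generating data for a free semi-theory: a family of free generators that are
not projections (the projections are added separately as free generators). -/
structure GenData : Type 1 where
  gen : ℕ+ → ℕ+ → Type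

/-- The generating quiver of the free semi-theory on `G`: the generators of `G`
together with projection arrows `p^n_k : [n] → [1]` for `n > 1`
(the projection `p^1_1` is the identity, i.e. the empty path). -/
inductive Arr (G : GenData) : ℕ+ → ℕ+ → Type
  | gen {a b : ℕ+} : G.gen a b → Arr G a b
  | proj {n : ℕ+} (h : 1 < (n : ℕ)) (k : Fin n) : Arr G n 1

/-- The object type of the free semi-theory on `G` (a copy of `Ob`). -/
def FreeOb (G : GenData) : Type := Ob

instance freeQuiver (G : GenData) : Quiver (FreeOb G) :=
  ⟨fun a b => Arr G (Ob.val a) (Ob.val b)⟩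

/-- The free semi-theory on `G`, as a category: the paths category on the
generating quiver. -/
abbrev FreeST (G : GenData) := CategoryTheory.Paths (FreeOb G)

/-- The object `[n]` of the free semi-theory. -/
def FreeST.of (G : GenData) (n : ℕ+) : FreeST G := (⟨n⟩ : Ob)

/-- The generating projection arrow, as an arrow of the generating quiver. -/
def projArr (G : GenData) {n : ℕ+} (h : 1 < (n : ℕ)) (k : Fin n) :
    @Quiver.Hom (FreeOb G) _ (FreeST.of G n) (FreeST.of G 1) := Arr.proj h k

/-- The projection `p^n_k` in the free semi-theory. -/
def projPath (G : GenData) (n : ℕ+) (k : Fin n) : FreeST.of G n ⟶ FreeST.of G 1 :=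
  if h : 1 < (n : ℕ) then (projArr G h k).toPath
  else eqToHom (congrArg (FreeST.of G)
    (PNat.coe_injective (by
      rw [PNat.one_coe]
      exact le_antisymm (not_lt.1 h) n.pos)))

/-- The free semi-theory on `G`, as a semi-theory. -/
def freeSemiTheory (G : GenData) : SemiTheory where
  cat := inferInstanceAs (Category (FreeST G))
  proj n k := projPath G n k
  proj_one := by
    show projPath G 1 ⟨0, Nat.one_pos⟩ = _
    rw [projPath, dif_neg (by norm_num)]
    rfl

/-- The initial semi-theory `P` has no generators besides the projections. -/
def emptyGen : GenData := ⟨fun _ _ => PEmpty⟩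

/-- The underlying category of the initial semi-theory `P`. -/
abbrev PCat := FreeST emptyGen

/-- The initial semi-theory `P`: its only non-identity morphisms are the projections. -/
def PTheory : SemiTheory := freeSemiTheory emptyGen

/-- The action of the unique morphism of semi-theories `P ⟶ C` on generating arrows. -/
def jArr (G : GenData) : ∀ {a b : ℕ+}, Arr emptyGen a b →
    @Quiver.Path (FreeOb G) _ ((⟨a⟩ : Ob) : FreeST G) ((⟨b⟩ : Ob) : FreeST G)
  | _, _, .gen α => α.elim
  | _, _, .proj h k => (projArr G h k).toPath

/-- The unique morphism of semi-theories `P ⟶ C` into a free semi-theory. -/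
def Jfree (G : GenData) : PCat ⥤ FreeST G :=
  Paths.lift
    { obj := fun n => (n : FreeST G)
      map := fun {a b} e => jArr G e }

/-! ### The completion of a free semi-theory -/

/-- Trees representing the morphisms `[n] ⟶ [1]` of the completion `C̄` of a free
semi-theory: either a single edge labelled by a projection `p^n_k`, or a tree whose
lowest edge is labelled by a component `α_i` of a non-projection generator
`α : [m] ⟶ [r]` and which is obtained by grafting `m` smaller trees. -/
inductive CTree (G : GenData) (n : ℕ+) : Type
  | proj (k : Fin n) : CTree G n
  | node {m r : ℕ+} (α : G.gen m r) (i : Fin r) (ts : Fin m → CTree G n) : CTree G n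

/-- Morphisms `[n] ⟶ [m]` in the completion: `m`-tuples of trees. -/
def CompHom (G : GenData) (n m : ℕ+) : Type := Fin m → CTree G n

/-- Grafting: substituting the trees `T k` for the initial edges labelled `p^m_k`. -/
def CTree.graft {G : GenData} {n m : ℕ+} : CTree G m → CompHom G n m → CTree G n
  | .proj k, T => T k
  | .node α i ts, T => .node α i (fun j => (ts j).graft T)

/-- The identity of the completion. -/
def compId (G : GenData) (n : ℕ+) : CompHom G n n := fun k => .proj k

/-- Composition in the completion, by grafting. -/
def compComp {G : GenData} {a b c : ℕ+} (T : CompHom G a b) (S : CompHom G b c) :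
    CompHom G a c :=
  fun j => (S j).graft T

theorem CTree.graft_id {G : GenData} {m : ℕ+} (t : CTree G m) :
    t.graft (compId G m) = t := by
  induction t with
  | proj k => rfl
  | node α i ts ih =>
      simp only [CTree.graft]
      congr 1
      funext j
      exact ih j

theorem CTree.graft_graft {G : GenData} {a b c : ℕ+} (s : CTree G c)
    (U : CompHom G b c) (T : CompHom G a b) :
    (s.graft U).graft T = s.graft (compComp T U) := by
  induction s with
  | proj k => rfl
  | node α i ts ih =>
      simp only [CTree.graft]
      congr 1
      funext j
      exact ih j

/-- The object type of the completion (a copy of `Ob`). -/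
def CompOb (G : GenData) : Type := Ob

/-- The completion `C̄` of a free semi-theory, as a category. -/
instance compCategory (G : GenData) : Category (CompOb G) where
  Hom n m := CompHom G (Ob.val n) (Ob.val m)
  id n := compId G _
  comp f g := compComp f g
  id_comp f := funext fun j => CTree.graft_id _
  comp_id f := rfl
  assoc f g h := funext fun j => (CTree.graft_graft _ _ _).symm

/-- The object `[n]` of the completion. -/
def CompOb.of (G : GenData) (n : ℕ+) : CompOb G := (⟨n⟩ : Ob)

/-- The projection `p̂^n_k` of the completion: a single edge labelled `p^n_k`. -/
def compProj (G : GenData) (n : ℕ+) (k : Fin n) : CompOb.of G n ⟶ CompOb.of G 1 :=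
  fun _ => .proj k

/-- The completion, as a semi-theory. -/
def compSemiTheory (G : GenData) : SemiTheory where
  cat := inferInstanceAs (Category (CompOb G))
  proj n k := compProj G n k
  proj_one := by
    funext i
    have h0 : i = ⟨0, Nat.one_pos⟩ := Fin.ext (Nat.lt_one_iff.mp i.isLt)
    rw [h0]
    rfl

/-- The completion functor `Φ` on generating arrows. -/
def phiArr (G : GenData) : ∀ {a b : ℕ+}, Arr G a b → CompHom G a b
  | _, _, .gen α => fun i => .node α i (fun k => .proj k)
  | _, _, .proj _ k => fun _ => .proj k

/-- The completion functor `Φ_C : C ⟶ C̄` of a free semi-theory. -/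
def phi (G : GenData) : FreeST G ⥤ CompOb G :=
  Paths.lift
    { obj := fun n => (n : CompOb G)
      map := fun {a b} e => phiArr G e }

/-! ### Discrete simplicial sets, products, mapping complexes -/

/-- The discrete simplicial set on a type. -/
@[simps]
def disc (A : Type) : SSet where
  obj _ := A
  map _ := TypeCat.ofHom id

/-- The map of discrete simplicial sets induced by a function. -/
@[simps]
def disc.map {A B : Type} (f : A → B) : disc A ⟶ disc B where
  app _ := TypeCat.ofHom f

/-- The diagram of (discrete) simplicial sets corepresented by the object `[n]`
of a semi-theory. -/
def SemiTheory.corep (S : SemiTheory) (n : ℕ+) : S.Diag :=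
  letI := S.cat
  { obj := fun m => disc ((⟨n⟩ : Ob) ⟶ m)
    map := fun f => disc.map (fun g => g ≫ f)
    map_id := fun m => by
      apply NatTrans.ext
      funext x; ext g
      exact Category.comp_id (g : (⟨n⟩ : Ob) ⟶ m)
    map_comp := fun f f' => by
      apply NatTrans.ext
      funext x; ext g
      exact (Category.assoc (g : (⟨n⟩ : Ob) ⟶ _) f f').symm }

/-- Levelwise product of two simplicial sets. -/
@[simps]
def mulC (A K : SSet) : SSet where
  obj m := A.obj m × K.obj m
  map θ := TypeCat.ofHom fun p => (A.map θ p.1, K.map θ p.2)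
  map_id m := by ext p <;> simp
  map_comp f g := by ext p <;> simp

/-- `f × id` on levelwise products. -/
@[simps]
def mulC.mapLeft {A B : SSet} (f : A ⟶ B) (K : SSet) : mulC A K ⟶ mulC B K where
  app m := TypeCat.ofHom fun p => (f.app m p.1, p.2)
  naturality m m' θ := by
    apply ConcreteCategory.hom_ext; intro p
    simp only [mulC_obj, mulC_map, types_comp_apply]
    exact Prod.ext (types_congr_hom (f.naturality θ) p.1) rfl

/-- `id × g` on levelwise products. -/
@[simps]
def mulC.mapRight (A : SSet) {K L : SSet} (g : K ⟶ L) : mulC A K ⟶ mulC A L where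
  app m := TypeCat.ofHom fun p => (p.1, g.app m p.2)
  naturality m m' θ := by
    apply ConcreteCategory.hom_ext; intro p
    simp only [mulC_obj, mulC_map, types_comp_apply]
    exact Prod.ext rfl (types_congr_hom (g.naturality θ) p.2)

theorem mulC.mapRight_id (A K : SSet) : mulC.mapRight A (𝟙 K) = 𝟙 (mulC A K) := by
  apply NatTrans.ext; funext x; apply ConcreteCategory.hom_ext; intro p; rfl

theorem mulC.mapRight_comp (A : SSet) {K L M : SSet} (g : K ⟶ L) (h : L ⟶ M) :
    mulC.mapRight A (g ≫ h) = mulC.mapRight A g ≫ mulC.mapRight A h := by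
  apply NatTrans.ext; funext x; apply ConcreteCategory.hom_ext; intro p; rfl

/-- Naturality, in applied form. -/
theorem natApply {C : Type} [Category C] {X Y : C ⥤ SSet} (f : X ⟶ Y)
    {c c' : C} (φ : c ⟶ c') (x : SimplexCategoryᵒᵖ) (a : (X.obj c).obj x) :
    (f.app c').app x ((X.map φ).app x a) = (Y.map φ).app x ((f.app c).app x a) :=
  types_congr_hom (NatTrans.congr_app (f.naturality φ) x) a

/-- The objectwise product of a diagram of simplicial sets with a constant
simplicial set. -/
@[simps]
def prodConst {C : Type} [Category C] (X : C ⥤ SSet) (K : SSet) : C ⥤ SSet where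
  obj c := mulC (X.obj c) K
  map f := mulC.mapLeft (X.map f) K
  map_id c := by
    apply NatTrans.ext; funext x; apply ConcreteCategory.hom_ext; intro p
    show ((X.map (𝟙 c)).app x p.1, p.2) = p
    rw [X.map_id]
    rfl
  map_comp f g := by
    apply NatTrans.ext; funext x; apply ConcreteCategory.hom_ext; intro p
    show ((X.map (f ≫ g)).app x p.1, p.2) = _
    rw [X.map_comp]
    rfl

/-- Functoriality of `prodConst` in the diagram variable. -/
@[simps]
def prodConst.mapX {C : Type} [Category C] {X X' : C ⥤ SSet} (f : X ⟶ X') (K : SSet) :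
    prodConst X K ⟶ prodConst X' K where
  app c := mulC.mapLeft (f.app c) K
  naturality c c' φ := by
    apply NatTrans.ext; funext x; apply ConcreteCategory.hom_ext; intro p
    simp only [prodConst_obj, prodConst_map, NatTrans.comp_app, mulC.mapLeft_app,
      types_comp_apply]
    exact Prod.ext (natApply f φ x p.1) rfl

/-- Functoriality of `prodConst` in the constant variable. -/
@[simps]
def prodConst.mapK {C : Type} [Category C] (X : C ⥤ SSet) {K L : SSet} (g : K ⟶ L) :
    prodConst X K ⟶ prodConst X L where
  app c := mulC.mapRight (X.obj c) g
  naturality c c' φ := by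
    apply NatTrans.ext; funext x; apply ConcreteCategory.hom_ext; intro p
    rfl

theorem prodConst.mapK_id {C : Type} [Category C] (X : C ⥤ SSet) (K : SSet) :
    prodConst.mapK X (𝟙 K) = 𝟙 (prodConst X K) := by
  apply NatTrans.ext; funext c
  exact mulC.mapRight_id _ _

theorem prodConst.mapK_comp {C : Type} [Category C] (X : C ⥤ SSet) {K L M : SSet}
    (g : K ⟶ L) (h : L ⟶ M) :
    prodConst.mapK X (g ≫ h) = prodConst.mapK X g ≫ prodConst.mapK X h := by
  apply NatTrans.ext; funext c
  exact mulC.mapRight_comp _ _ _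

/-- The standard simplex `Δ[k]`, for `k : SimplexCategoryᵒᵖ`. -/
def stdS (k : SimplexCategoryᵒᵖ) : SSet := SSet.stdSimplex.obj k.unop

/-- Functoriality of the standard simplex (contravariantly in `SimplexCategoryᵒᵖ`). -/
def stdMap {k l : SimplexCategoryᵒᵖ} (θ : k ⟶ l) : stdS l ⟶ stdS k :=
  SSet.stdSimplex.map θ.unop

theorem stdMap_id (k : SimplexCategoryᵒᵖ) : stdMap (𝟙 k) = 𝟙 (stdS k) :=
  SSet.stdSimplex.map_id _

theorem stdMap_comp {k l m : SimplexCategoryᵒᵖ} (θ : k ⟶ l) (η : l ⟶ m) :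
    stdMap (θ ≫ η) = stdMap η ≫ stdMap θ :=
  SSet.stdSimplex.map_comp _ _

/-- The simplicial mapping complex of two diagrams of simplicial sets: its
`m`-simplices are the natural transformations `X × Δ[m] ⟶ Y`. -/
def MapCx {C : Type} [Category C] (X Y : C ⥤ SSet) : SSet where
  obj m := prodConst X (stdS m) ⟶ Y
  map {m m'} θ := TypeCat.ofHom fun t => prodConst.mapK X (stdMap θ) ≫ t
  map_id m := by
    apply ConcreteCategory.hom_ext; intro t
    simp [stdMap_id, prodConst.mapK_id]
  map_comp θ η := by
    apply ConcreteCategory.hom_ext; intro t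
    simp [stdMap_comp, prodConst.mapK_comp]

/-- Precomposition on mapping complexes. -/
def MapCx.pre {C : Type} [Category C] {X X' : C ⥤ SSet} (f : X' ⟶ X) (Y : C ⥤ SSet) :
    MapCx X Y ⟶ MapCx X' Y where
  app m := TypeCat.ofHom fun t => prodConst.mapX f (stdS m) ≫ t
  naturality m m' θ := by
    apply ConcreteCategory.hom_ext; intro t
    rfl

/-- Postcomposition on mapping complexes. -/
def MapCx.post {C : Type} [Category C] (X : C ⥤ SSet) {Y Y' : C ⥤ SSet} (g : Y ⟶ Y') :
    MapCx X Y ⟶ MapCx X Y' where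
  app m := TypeCat.ofHom fun t => t ≫ g
  naturality m m' θ := by
    apply ConcreteCategory.hom_ext; intro t
    rfl

/-- Restriction of mapping complexes along a functor. -/
def MapCx.whisk {C D : Type} [Category C] [Category D] (F : D ⥤ C) (X Y : C ⥤ SSet) :
    MapCx X Y ⟶ MapCx (F ⋙ X) (F ⋙ Y) where
  app m := TypeCat.ofHom fun t =>
    (show prodConst (F ⋙ X) (stdS m) ⟶ F ⋙ Y from CategoryTheory.Functor.whiskerLeft F t)
  naturality m m' θ := by
    apply ConcreteCategory.hom_ext; intro t
    rfl

/-- The simplicial mapping complex of two simplicial sets: its `m`-simplices are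
the maps `A × Δ[m] ⟶ B`. -/
def sMap (A B : SSet) : SSet where
  obj m := mulC A (stdS m) ⟶ B
  map {m m'} θ := TypeCat.ofHom fun t => mulC.mapRight A (stdMap θ) ≫ t
  map_id m := by
    apply ConcreteCategory.hom_ext; intro t
    simp [stdMap_id, mulC.mapRight_id]
  map_comp θ η := by
    apply ConcreteCategory.hom_ext; intro t
    simp [stdMap_comp, mulC.mapRight_comp]

/-- Precomposition on simplicial mapping complexes. -/
def sMap.pre {A A' : SSet} (f : A' ⟶ A) (B : SSet) : sMap A B ⟶ sMap A' B where
  app m := TypeCat.ofHom fun t => mulC.mapLeft f (stdS m) ≫ t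
  naturality m m' θ := by
    apply ConcreteCategory.hom_ext; intro t
    rfl

/-- Postcomposition on simplicial mapping complexes. -/
def sMap.post (A : SSet) {B B' : SSet} (g : B ⟶ B') : sMap A B ⟶ sMap A B' where
  app m := TypeCat.ofHom fun t => t ≫ g
  naturality m m' θ := by
    apply ConcreteCategory.hom_ext; intro t
    rfl

/-! ### Decompositions of morphisms of a free semi-theory -/

/-- Whether a generating arrow is a generator of `G` (as opposed to a projection). -/
def Arr.isGen {G : GenData} : ∀ {a b : ℕ+}, Arr G a b → Prop
  | _, _, .gen _ => True
  | _, _, .proj _ _ => False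

/-- A morphism `φ = α_k ∘ ⋯ ∘ α_1` of a free semi-theory (a path in the generating
quiver) starts with a non-projection: `α_1` is not a projection. -/
def startsNonProj {G : GenData} : ∀ {a b : FreeOb G}, Quiver.Path a b → Prop
  | _, _, .nil => False
  | _, _, .cons .nil e => Arr.isGen e
  | _, _, .cons (.cons p e') _ => startsNonProj (Quiver.Path.cons p e')

/-- The first `j` arrows of a path (together with their target). -/
def pathTake {V : Type} [Quiver.{1} V] {a : V} : ∀ {b : V}, Quiver.Path a b → ℕ → Σ c : V, Quiver.Path a c
  | _, .nil, _ => ⟨a, .nil⟩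
  | b, .cons p e, j => if j ≤ p.length then pathTake p j else ⟨b, .cons p e⟩

/-! ### The diagram `D̄_n` and its filtrations -/

/-- The `D`-diagram `D̄_n` with `D̄_n[m] = Hom_{D̄}([n],[m])`, where the `D`-action
is given by composition via the completion functor `Φ`. -/
def barDn (G : GenData) (n : ℕ+) : FreeST G ⥤ SSet where
  obj m := disc (CompOb.of G n ⟶ (phi G).obj m)
  map {a b} ψ := disc.map (fun T => T ≫ (phi G).map ψ)
  map_id a := by
    apply NatTrans.ext
    funext x; apply ConcreteCategory.hom_ext; intro T
    show T ≫ (phi G).map (𝟙 a) = T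
    rw [CategoryTheory.Functor.map_id]; exact Category.comp_id _
  map_comp {a b c} ψ ψ' := by
    apply NatTrans.ext
    funext x; apply ConcreteCategory.hom_ext; intro T
    show T ≫ (phi G).map (ψ ≫ ψ') = (T ≫ (phi G).map ψ) ≫ (phi G).map ψ'
    rw [CategoryTheory.Functor.map_comp]; exact (Category.assoc _ _ _).symm

/-- The filtration of `D̄_n` by sub-`D`-diagrams:
`D̄_n^0 = D_n` (the image of the corepresented diagram) and `D̄_n^{k+1}` is the
smallest sub-`D`-diagram containing all tuples of elements of `D̄_n^k[1]`. -/
def Filt (G : GenData) (n : ℕ+) : ℕ → ∀ m : ℕ+, Set (CompHom G n m)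
  | 0, m => {T | ∃ ψ : FreeST.of G n ⟶ FreeST.of G m, T = (phi G).map ψ}
  | k+1, m => {T | ∃ (m' : ℕ+) (S : CompHom G n m')
      (ψ : FreeST.of G m' ⟶ FreeST.of G m),
      (∀ j : Fin m', (fun _ : Fin 1 => S j) ∈ Filt G n k 1) ∧
        T = (S : CompOb.of G n ⟶ CompOb.of G m') ≫ (phi G).map ψ}

/-- The filtration of `D̄_n` by sub-`P`-diagrams: `sD̄_n^0 = D_n` and `sD̄_n^{k+1}` is
the smallest sub-`P`-diagram containing all tuples of elements of `D̄ₙ^k[1]`. -/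
def sFilt (G : GenData) (n : ℕ+) : ℕ → ∀ m : ℕ+, Set (CompHom G n m)
  | 0, m => Filt G n 0 m
  | k+1, m => {T | ∀ j : Fin m, (fun _ : Fin 1 => T j) ∈ Filt G n k 1}

theorem Filt.closed (G : GenData) (n : ℕ+) (k : ℕ) {a b : ℕ+}
    {T : CompOb.of G n ⟶ CompOb.of G a} (hT : T ∈ Filt G n k a)
    (ψ : FreeST.of G a ⟶ FreeST.of G b) : T ≫ (phi G).map ψ ∈ Filt G n k b := by
  cases k with
  | zero =>
      obtain ⟨ψ₀, rfl⟩ := hT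
      exact ⟨ψ₀ ≫ ψ, by rw [CategoryTheory.Functor.map_comp]; rfl⟩
  | succ k =>
      obtain ⟨m', S, ψ₁, hS, rfl⟩ := hT
      exact ⟨m', S, ψ₁ ≫ ψ, hS, by rw [CategoryTheory.Functor.map_comp]; exact Category.assoc _ _ _⟩

theorem phi_map_toPath (G : GenData) {a b : FreeOb G}
    (e : @Quiver.Hom (FreeOb G) _ a b) :
    (phi G).map e.toPath = phiArr G e :=
  Paths.lift_toPath _ _

theorem Filt.comp_proj (G : GenData) (n : ℕ+) (k : ℕ) {m : ℕ+} {T : CompHom G n m}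
    (hT : T ∈ Filt G n k m) (j : Fin m) : (fun _ : Fin 1 => T j) ∈ Filt G n k 1 := by
  by_cases h : 1 < (m : ℕ)
  · have hc := Filt.closed G n k hT (projPath G m j)
    have he : (T : CompOb.of G n ⟶ CompOb.of G m) ≫ (phi G).map (projPath G m j)
        = (fun _ : Fin 1 => T j) := by
      unfold projPath
      rw [dif_pos h]
      rw [phi_map_toPath G (projArr G h j)]
      rfl
    exact (congrArg (fun S => S ∈ Filt G n k 1) he).mp hc
  · have hm : m = 1 := PNat.coe_injective (by
      rw [PNat.one_coe]
      exact le_antisymm (not_lt.1 h) m.pos)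
    subst hm
    have ht : (fun _ : Fin 1 => T j) = T := by
      funext i
      congr 1
      exact Fin.ext (by
        rw [Nat.lt_one_iff.mp i.isLt, Nat.lt_one_iff.mp j.isLt])
    rwa [ht]

theorem sFilt.closed_arr (G : GenData) (n : ℕ+) (k : ℕ) {c b : ℕ+}
    {T : CompHom G n c} (hT : T ∈ sFilt G n k c) (e : Arr emptyGen c b) :
    (T : CompOb.of G n ⟶ CompOb.of G c) ≫ (phi G).map (jArr G e) ∈ sFilt G n k b := by
  cases e with
  | gen α => exact α.elim
  | proj h j =>
      have h1 : (phi G).map (jArr G (Arr.proj h j)) = phiArr G (Arr.proj h j) := by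
        show (phi G).map (projArr G h j).toPath = _
        exact phi_map_toPath G _
      rw [h1]
      show (fun _ : Fin 1 => T j) ∈ sFilt G n k 1
      cases k with
      | zero => exact Filt.comp_proj G n 0 hT j
      | succ k' => intro i; exact hT j

theorem sFilt.closed (G : GenData) (n : ℕ+) (k : ℕ) {a b : PCat}
    {T : CompOb.of G n ⟶ CompOb.of G (Ob.val a)} (hT : T ∈ sFilt G n k (Ob.val a))
    (ψ : a ⟶ b) :
    T ≫ (phi G).map ((Jfree G).map ψ) ∈ sFilt G n k (Ob.val b) := by
  induction ψ using Paths.induction_fixed_source with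
  | id => exact hT
  | comp p e ih =>
      have h2 : (Jfree G).map ((Paths.of _).map e) = jArr G e := Paths.lift_toPath _ _
      have h3 : (phi G).map ((Jfree G).map (p ≫ (Paths.of _).map e))
          = (phi G).map ((Jfree G).map p) ≫ (phi G).map (jArr G e) := by
        rw [CategoryTheory.Functor.map_comp, CategoryTheory.Functor.map_comp, h2]; rfl
      exact (congrArg (fun S => T ≫ S ∈ sFilt G n k _) h3).mpr
        ((congrArg (fun S => S ∈ sFilt G n k _) (Category.assoc _ _ _)).mp
          (sFilt.closed_arr G n k ih e))

/-- The sub-`D`-diagram `D̄_n^k` of `D̄_n`. -/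
def FiltDiag (G : GenData) (n : ℕ+) (k : ℕ) : FreeST G ⥤ SSet where
  obj m := disc (Filt G n k (Ob.val m))
  map {a b} ψ := disc.map (fun T => ⟨T.1 ≫ (phi G).map ψ, Filt.closed G n k T.2 ψ⟩)
  map_id a := by
    apply NatTrans.ext
    funext x; apply ConcreteCategory.hom_ext; intro T
    apply Subtype.ext
    show T.1 ≫ (phi G).map (𝟙 a) = T.1
    rw [CategoryTheory.Functor.map_id]; exact Category.comp_id _
  map_comp {a b c} ψ ψ' := by
    apply NatTrans.ext
    funext x; apply ConcreteCategory.hom_ext; intro T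
    apply Subtype.ext
    show T.1 ≫ (phi G).map (ψ ≫ ψ') = (T.1 ≫ (phi G).map ψ) ≫ (phi G).map ψ'
    rw [CategoryTheory.Functor.map_comp]; exact (Category.assoc _ _ _).symm

/-- The sub-`P`-diagram `sD̄_n^k` of `D̄_n`. -/
def sFiltDiag (G : GenData) (n : ℕ+) (k : ℕ) : PCat ⥤ SSet where
  obj m := disc (sFilt G n k (Ob.val m))
  map {a b} ψ := disc.map (fun T => ⟨T.1 ≫ (phi G).map ((Jfree G).map ψ),
    sFilt.closed G n k T.2 ψ⟩)
  map_id a := by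
    apply NatTrans.ext
    funext x; apply ConcreteCategory.hom_ext; intro T
    apply Subtype.ext
    show T.1 ≫ (phi G).map ((Jfree G).map (𝟙 a)) = T.1
    rw [CategoryTheory.Functor.map_id, CategoryTheory.Functor.map_id]; exact Category.comp_id _
  map_comp {a b c} ψ ψ' := by
    apply NatTrans.ext
    funext x; apply ConcreteCategory.hom_ext; intro T
    apply Subtype.ext
    show T.1 ≫ (phi G).map ((Jfree G).map (ψ ≫ ψ')) =
      (T.1 ≫ (phi G).map ((Jfree G).map ψ)) ≫ (phi G).map ((Jfree G).map ψ')
    rw [CategoryTheory.Functor.map_comp, CategoryTheory.Functor.map_comp]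
    exact (Category.assoc _ _ _).symm


theorem Filt.mono (G : GenData) (n : ℕ+) (k : ℕ) (m : ℕ+) :
    Filt G n k m ⊆ Filt G n (k+1) m := by
  intro T hT
  exact ⟨m, T, 𝟙 _, fun j => Filt.comp_proj G n k hT j,
    by rw [CategoryTheory.Functor.map_id]; exact (Category.comp_id (X := CompOb.of G n) (Y := CompOb.of G m) T).symm⟩

theorem Filt.subset_sFilt (G : GenData) (n : ℕ+) (k : ℕ) (m : ℕ+) :
    Filt G n k m ⊆ sFilt G n (k+1) m :=
  fun _ hT j => Filt.comp_proj G n k hT j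

theorem sFilt.subset_Filt (G : GenData) (n : ℕ+) (k : ℕ) (m : ℕ+) :
    sFilt G n (k+1) m ⊆ Filt G n (k+1) m := by
  intro T hT
  exact ⟨m, T, 𝟙 _, hT, by
    rw [CategoryTheory.Functor.map_id]; exact (Category.comp_id (X := CompOb.of G n) (Y := CompOb.of G m) T).symm⟩

/-- Restriction of a `D`-diagram to a `P`-diagram. -/
def resP (G : GenData) (X : FreeST G ⥤ SSet) : PCat ⥤ SSet := Jfree G ⋙ X

/-- The inclusion `D̄_n^k ⟶ D̄_n^{k+1}` of sub-`D`-diagrams. -/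
def filtIncl (G : GenData) (n : ℕ+) (k : ℕ) : FiltDiag G n k ⟶ FiltDiag G n (k+1) where
  app m := disc.map (Set.inclusion (Filt.mono G n k (Ob.val m)))
  naturality a b ψ := by
    apply NatTrans.ext
    funext x; apply ConcreteCategory.hom_ext; intro T
    apply Subtype.ext
    rfl

/-- The inclusion `D̄_n^k ⟶ sD̄_n^{k+1}` of sub-`P`-diagrams. -/
def filtInclS (G : GenData) (n : ℕ+) (k : ℕ) :
    resP G (FiltDiag G n k) ⟶ sFiltDiag G n (k+1) where
  app m := disc.map (Set.inclusion (Filt.subset_sFilt G n k (Ob.val m)))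
  naturality a b ψ := by
    apply NatTrans.ext
    funext x; apply ConcreteCategory.hom_ext; intro T
    apply Subtype.ext
    rfl

/-- The inclusion `sD̄_n^{k+1} ⟶ D̄_n^{k+1}` of sub-`P`-diagrams. -/
def sFiltIncl (G : GenData) (n : ℕ+) (k : ℕ) :
    sFiltDiag G n (k+1) ⟶ resP G (FiltDiag G n (k+1)) where
  app m := disc.map (Set.inclusion (sFilt.subset_Filt G n k (Ob.val m)))
  naturality a b ψ := by
    apply NatTrans.ext
    funext x; apply ConcreteCategory.hom_ext; intro T
    apply Subtype.ext
    rfl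


section Exp
variable {G : GenData} {n : ℕ+}

-- defeq: Jfree.obj b = b
example (b : FreeST G) : (Jfree G).obj b = b := rfl
example (b : FreeST G) : (phi G).obj b = b := rfl
-- cons = comp
example {a b c : FreeST G} (p : a ⟶ b) (e : @Quiver.Hom (FreeOb G) _ b c) :
    (Quiver.Path.cons p e : a ⟶ c) = p ≫ e.toPath := rfl
-- comp in completion
example {a b c : CompOb G} (f : a ⟶ b) (g : b ⟶ c) (j : Fin (Ob.val c)) : (f ≫ g) j = (g j).graft f := rfl

def cmp {b b' : FreeST G} (S : CompHom G n (Ob.val b)) (ψ : b ⟶ b') : CompHom G n (Ob.val b') :=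
  (S : CompOb.of G n ⟶ (phi G).obj b) ≫ (phi G).map ψ

def pcons {a b c : FreeST G} (χ : a ⟶ b) (e : @Quiver.Hom (FreeOb G) (freeQuiver G) b c) :
    a ⟶ c := Quiver.Path.cons χ e

lemma comp_cons_gen {a c b : FreeST G} (S : CompHom G n (Ob.val a)) (χ : a ⟶ c)
    (β : G.gen (Ob.val c) (Ob.val b)) :
    cmp S (pcons χ (Arr.gen β)) = fun j => CTree.node β j (cmp S χ) := rfl

lemma comp_cons_proj {a c : FreeST G} (S : CompHom G n (Ob.val a)) (χ : a ⟶ c)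
    (h1 : 1 < ((Ob.val c) : ℕ)) (l : Fin (Ob.val c)) :
    cmp S (pcons χ (Arr.proj h1 l)) = fun _ => (cmp S χ) l := rfl

lemma arr_cases {a b : ℕ+} (e : Arr G a b) :
    (∃ β : G.gen a b, e = Arr.gen β) ∨ (∃ (_ : b = 1) (h1 : 1 < (a:ℕ)) (l : Fin a), HEq e (Arr.proj (G:=G) h1 l)) := by
  cases e with
  | gen β => exact Or.inl ⟨β, rfl⟩
  | proj h1 l => exact Or.inr ⟨rfl, h1, l, HEq.rfl⟩

-- part 1 rfl test
example (k : ℕ) (X : FreeST G ⥤ SSet) (w : FiltDiag G n (k+1) ⟶ X) :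
      filtInclS G n k ≫ (sFiltIncl G n k ≫ CategoryTheory.Functor.whiskerLeft (Jfree G) w)
        = CategoryTheory.Functor.whiskerLeft (Jfree G) (filtIncl G n k ≫ w) := rfl

lemma h0aux {m₁ r : ℕ+} {α : G.gen m₁ r} {i : Fin r} {S : CompHom G n m₁} :
    ∀ {b : FreeST G} (χ : FreeST.of G n ⟶ b) (j : Fin (Ob.val b)),
      (phi G).map χ j = CTree.node α i S → S ∈ Filt G n 0 m₁ := by
  intro b χ
  change @Quiver.Path (FreeOb G) _ _ _ at χ
  induction χ with
  | nil =>
    intro j h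
    have h' : CTree.proj j = CTree.node α i S := h
    cases h'
  | cons χ₀ e ih =>
    intro j h
    rcases arr_cases e with ⟨β, rfl⟩ | ⟨hb, h1, l, he⟩
    · have h' : CTree.node β j ((phi G).map χ₀) = CTree.node α i S := h
      injection h' with hm hr hα hi hts
      subst hm; subst hr
      exact ⟨χ₀, (eq_of_heq hts).symm⟩
    · have hb' : _ = FreeST.of G 1 := Ob.ext hb
      subst hb'
      have he' : e = Arr.proj h1 l := eq_of_heq he
      subst he'
      exact ih l h

lemma h1aux (k : ℕ)
    (ihk : ∀ {m₁ r : ℕ+} (α : G.gen m₁ r) (i : Fin r) (S : CompHom G n m₁),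
      (fun _ : Fin 1 => CTree.node α i S) ∈ Filt G n k 1 → S ∈ Filt G n k m₁)
    {m₁ r : ℕ+} {α : G.gen m₁ r} {i : Fin r} {S : CompHom G n m₁}
    {m₂ : ℕ+} (S₂ : CompHom G n m₂) (hS₂ : ∀ l : Fin m₂, (fun _ : Fin 1 => S₂ l) ∈ Filt G n k 1) :
    ∀ {b : FreeST G} (χ : FreeST.of G m₂ ⟶ b) (j : Fin (Ob.val b)),
      ((phi G).map χ j).graft S₂ = CTree.node α i S → S ∈ Filt G n (k+1) m₁ := by
  intro b χ
  change @Quiver.Path (FreeOb G) _ _ _ at χ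
  induction χ with
  | nil =>
    intro j h
    have h' : S₂ j = CTree.node α i S := h
    apply Filt.mono
    apply ihk α i S
    rw [show (fun _ : Fin 1 => CTree.node α i S) = (fun _ : Fin 1 => S₂ j) from by rw [h']]
    exact hS₂ j
  | cons χ₀ e ih =>
    intro j h
    rcases arr_cases e with ⟨β, rfl⟩ | ⟨hb, h1, l, he⟩
    · have h' : CTree.node β j (fun l => ((phi G).map χ₀ l).graft S₂) = CTree.node α i S := h
      injection h' with hm hr hα hi hts
      subst hm; subst hr
      refine ⟨m₂, S₂, χ₀, hS₂, ?_⟩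
      exact funext fun l => (congrFun (eq_of_heq hts) l).symm
    · have hb' : _ = FreeST.of G 1 := Ob.ext hb
      subst hb'
      have he' : e = Arr.proj h1 l := eq_of_heq he
      subst he'
      exact ih l h

lemma nodeChar : ∀ (k : ℕ) {m₁ r : ℕ+} (α : G.gen m₁ r) (i : Fin r) (S : CompHom G n m₁),
    (fun _ : Fin 1 => CTree.node α i S) ∈ Filt G n k 1 → S ∈ Filt G n k m₁ := by
  intro k
  induction k with
  | zero =>
    intro m₁ r α i S h
    obtain ⟨ψ, hψ⟩ := h
    exact h0aux ψ ⟨0, Nat.one_pos⟩ (congrFun hψ ⟨0, Nat.one_pos⟩).symm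
  | succ k ihk =>
    intro m₁ r α i S h
    obtain ⟨m₂, S₂, ψ, hS₂, hψ⟩ := h
    exact h1aux k (fun α i S h => ihk α i S h) S₂ hS₂ ψ ⟨0, Nat.one_pos⟩
      (congrFun hψ ⟨0, Nat.one_pos⟩).symm

def genHom {a b : FreeST G} (β : G.gen (Ob.val a) (Ob.val b)) :
    @Quiver.Hom (FreeOb G) _ a b := Arr.gen β

def projHom {c : FreeST G} (h1 : 1 < ((Ob.val c) : ℕ)) (l : Fin (Ob.val c)) :
    @Quiver.Hom (FreeOb G) _ c (FreeST.of G 1) := Arr.proj h1 l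

def projHomP {c : PCat} (h1 : 1 < ((Ob.val c) : ℕ)) (l : Fin (Ob.val c)) :
    @Quiver.Hom (FreeOb emptyGen) _ c (FreeST.of emptyGen 1) := Arr.proj h1 l

def plen {a b : FreeST G} (χ : a ⟶ b) : ℕ :=
  @Quiver.Path.length (FreeOb G) (freeQuiver G) _ _ χ

lemma cmp_id {b : FreeST G} (S : CompHom G n (Ob.val b)) : cmp S (𝟙 b) = S := by
  show _ ≫ (phi G).map (𝟙 b) = _
  rw [CategoryTheory.Functor.map_id]
  exact Category.comp_id _

lemma cmp_comp {a b c : FreeST G} (S : CompHom G n (Ob.val a)) (ψ : a ⟶ b) (η : b ⟶ c) :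
    cmp S (ψ ≫ η) = cmp (cmp S ψ) η := by
  show _ ≫ (phi G).map (ψ ≫ η) = _
  rw [CategoryTheory.Functor.map_comp]
  exact (Category.assoc _ _ _).symm

section Vals

variable (k : ℕ) (X : FreeST G ⥤ SSet) (u : FiltDiag G n k ⟶ X) (v : sFiltDiag G n (k+1) ⟶ resP G X)

def vvv (x : SimplexCategoryᵒᵖ) (b : FreeST G) (S : CompHom G n (Ob.val b))
    (hS : S ∈ sFilt G n (k+1) (Ob.val b)) : (X.obj b).obj x :=
  (v.app b).app x ⟨S, hS⟩

def uuu (x : SimplexCategoryᵒᵖ) (b : FreeST G) (W : CompHom G n (Ob.val b))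
    (hW : W ∈ Filt G n k (Ob.val b)) : (X.obj b).obj x :=
  (u.app b).app x ⟨W, hW⟩

def Xmap (x : SimplexCategoryᵒᵖ) {b b' : FreeST G} (ψ : b ⟶ b') :
    (X.obj b).obj x → (X.obj b').obj x := (X.map ψ).app x

lemma vvv_congr (x : SimplexCategoryᵒᵖ) (b : FreeST G) {S S' : CompHom G n (Ob.val b)}
    (h : S = S') (hS : S ∈ sFilt G n (k+1) (Ob.val b)) (hS' : S' ∈ sFilt G n (k+1) (Ob.val b)) :
    vvv k X v x b S hS = vvv k X v x b S' hS' := by subst h; rfl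

lemma uuu_congr (x : SimplexCategoryᵒᵖ) (b : FreeST G) {W W' : CompHom G n (Ob.val b)}
    (h : W = W') (hW : W ∈ Filt G n k (Ob.val b)) (hW' : W' ∈ Filt G n k (Ob.val b)) :
    uuu k X u x b W hW = uuu k X u x b W' hW' := by subst h; rfl

lemma Xmap_comp (x : SimplexCategoryᵒᵖ) {a b c : FreeST G} (ψ : a ⟶ b) (η : b ⟶ c)
    (t : (X.obj a).obj x) : Xmap X x (ψ ≫ η) t = Xmap X x η (Xmap X x ψ t) := by
  show (X.map (ψ ≫ η)).app x t = _
  rw [CategoryTheory.Functor.map_comp]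
  rfl

lemma Xmap_nil (x : SimplexCategoryᵒᵖ) {b : FreeST G} (t : (X.obj b).obj x) :
    Xmap X x (Quiver.Path.nil) t = t := by
  show (X.map (𝟙 b)).app x t = t
  rw [CategoryTheory.Functor.map_id]
  rfl

lemma vvv_natP (x : SimplexCategoryᵒᵖ) {a b : PCat} (ψP : a ⟶ b)
    (S : CompHom G n (Ob.val a)) (hS : S ∈ sFilt G n (k+1) (Ob.val a))
    (S' : CompHom G n (Ob.val b)) (hS' : S' ∈ sFilt G n (k+1) (Ob.val b))
    (h : S' = cmp S ((Jfree G).map ψP)) :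
    vvv k X v x b S' hS' = Xmap X x ((Jfree G).map ψP) (vvv k X v x a S hS) := by
  subst h
  exact types_congr_hom (NatTrans.congr_app (v.naturality ψP) x) ⟨S, hS⟩

lemma vvv_proj (x : SimplexCategoryᵒᵖ) {c : FreeST G} (h1 : 1 < ((Ob.val c) : ℕ))
    (l : Fin (Ob.val c)) (S : CompHom G n (Ob.val c)) (hS : S ∈ sFilt G n (k+1) (Ob.val c))
    (S' : CompHom G n 1) (hS' : S' ∈ sFilt G n (k+1) 1)
    (h : S' = cmp S ((projHom (G := G) h1 l).toPath)) :
    vvv k X v x (FreeST.of G 1) S' hS' = Xmap X x ((projHom h1 l).toPath) (vvv k X v x c S hS) := by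
  have hJ : (Jfree G).map ((projHomP (c := c) h1 l).toPath) = (projHom (G := G) h1 l).toPath :=
    Paths.lift_toPath _ _
  refine (vvv_natP k X v x ((projHomP (c := c) h1 l).toPath) S hS S' hS' ?_).trans ?_
  · rw [hJ]; exact h
  · rw [hJ]; rfl

lemma compat (hc : filtInclS G n k ≫ v = CategoryTheory.Functor.whiskerLeft (Jfree G) u)
    (x : SimplexCategoryᵒᵖ) (b : FreeST G) (W : CompHom G n (Ob.val b))
    (hW : W ∈ Filt G n k (Ob.val b)) (hW' : W ∈ sFilt G n (k+1) (Ob.val b)) :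
    vvv k X v x b W hW' = uuu k X u x b W hW :=
  types_congr_hom (NatTrans.congr_app (NatTrans.congr_app hc b) x) ⟨W, hW⟩

lemma uuu_natD (x : SimplexCategoryᵒᵖ) {b b' : FreeST G} (ψ : b ⟶ b')
    (W : CompHom G n (Ob.val b)) (hW : W ∈ Filt G n k (Ob.val b))
    (W' : CompHom G n (Ob.val b')) (hW' : W' ∈ Filt G n k (Ob.val b'))
    (h : W' = cmp W ψ) :
    uuu k X u x b' W' hW' = Xmap X x ψ (uuu k X u x b W hW) := by
  subst h
  exact types_congr_hom (NatTrans.congr_app (u.naturality ψ) x) ⟨W, hW⟩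

end Vals

section Main

variable (k : ℕ) (X : FreeST G ⥤ SSet) (u : FiltDiag G n k ⟶ X) (v : sFiltDiag G n (k+1) ⟶ resP G X)

lemma lemV_nil (hc : filtInclS G n k ≫ v = CategoryTheory.Functor.whiskerLeft (Jfree G) u)
    (x : SimplexCategoryᵒᵖ) {b : FreeST G} (S : CompHom G n (Ob.val b))
    (hS : S ∈ sFilt G n (k+1) (Ob.val b))
    (hW : cmp S (Quiver.Path.nil : b ⟶ b) ∈ Filt G n k (Ob.val b)) :
    Xmap X x (Quiver.Path.nil : b ⟶ b) (vvv k X v x b S hS)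
      = uuu k X u x b (cmp S Quiver.Path.nil) hW := by
  have hWS : S ∈ Filt G n k (Ob.val b) := by
    rw [show (Quiver.Path.nil : b ⟶ b) = 𝟙 b from rfl, cmp_id] at hW
    exact hW
  calc Xmap X x (Quiver.Path.nil : b ⟶ b) (vvv k X v x b S hS)
      = vvv k X v x b S hS := Xmap_nil X x _
    _ = uuu k X u x b S hWS := compat k X u v hc x b S hWS hS
    _ = uuu k X u x b (cmp S Quiver.Path.nil) hW :=
        uuu_congr k X u x b (cmp_id S).symm hWS hW

lemma lemV (hc : filtInclS G n k ≫ v = CategoryTheory.Functor.whiskerLeft (Jfree G) u) :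
    ∀ (N : ℕ) (x : SimplexCategoryᵒᵖ) {b b' : FreeST G} (ψ : b ⟶ b'), plen ψ ≤ N →
    ∀ (S : CompHom G n (Ob.val b)) (hS : S ∈ sFilt G n (k+1) (Ob.val b))
      (hW : cmp S ψ ∈ Filt G n k (Ob.val b')),
      Xmap X x ψ (vvv k X v x b S hS) = uuu k X u x b' (cmp S ψ) hW := by
  intro N
  induction N with
  | zero =>
    intro x b b' ψ hlen S hS hW
    change @Quiver.Path (FreeOb G) _ _ _ at ψ
    cases ψ with
    | nil => exact lemV_nil k X u v hc x S hS hW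
    | cons χ e => exact absurd hlen (Nat.not_succ_le_zero _)
  | succ N ihN =>
    intro x b b' ψ hlen S hS hW
    change @Quiver.Path (FreeOb G) _ _ _ at ψ
    cases ψ with
    | nil => exact lemV_nil k X u v hc x S hS hW
    | @cons mid _ χ e =>
      rcases arr_cases e with ⟨β, rfl⟩ | ⟨hb, h1, l, he⟩
      · -- last arrow is a generator
        have hlen' : plen χ ≤ N := Nat.succ_le_succ_iff.mp hlen
        have hU : cmp S χ ∈ Filt G n k (Ob.val mid) := by
          apply nodeChar k β ⟨0, (Ob.val b').pos⟩ (cmp S χ)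
          exact Filt.comp_proj G n k hW ⟨0, (Ob.val b').pos⟩
        have ih := ihN x χ hlen' S hS hU
        refine Eq.trans (Xmap_comp X x χ ((genHom (a := mid) (b := b') β).toPath)
          (vvv k X v x b S hS)) ?_
        rw [ih]
        exact (uuu_natD k X u x ((genHom (a := mid) (b := b') β).toPath) (cmp S χ) hU _ hW
          (cmp_comp S χ ((genHom (a := mid) (b := b') β).toPath))).symm
      · -- last arrow is a projection
        have hb' : _ = FreeST.of G 1 := Ob.ext hb
        subst hb'
        have he' : e = Arr.proj h1 l := eq_of_heq he
        subst he'
        cases χ with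
        | nil =>
          have hT : cmp S ((projHom (G := G) h1 l).toPath) ∈ sFilt G n (k+1) 1 := by
            intro j
            exact hS l
          have h2 := vvv_proj k X v x h1 l S hS _ hT rfl
          exact h2.symm.trans (compat k X u v hc x _ _ hW hT)
        | @cons d _ χ₁ f =>
          rcases arr_cases f with ⟨γ, rfl⟩ | ⟨hc1, hf1, l₁, hef⟩
          · -- second-to-last arrow is a generator
            have hlen' : plen χ₁ ≤ N := Nat.le_of_succ_le (Nat.succ_le_succ_iff.mp hlen)
            have hU : cmp S χ₁ ∈ Filt G n k (Ob.val d) := by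
              apply nodeChar k γ l (cmp S χ₁)
              exact hW
            have ih := ihN x χ₁ hlen' S hS hU
            refine Eq.trans (Xmap_comp X x χ₁
              ((genHom (a := d) (b := mid) γ).toPath ≫ (projHom (G := G) h1 l).toPath)
              (vvv k X v x b S hS)) ?_
            rw [ih]
            exact (uuu_natD k X u x
              ((genHom (a := d) (b := mid) γ).toPath ≫ (projHom (G := G) h1 l).toPath)
              (cmp S χ₁) hU _ hW (cmp_comp S χ₁ ((genHom (a := d) (b := mid) γ).toPath ≫ (projHom (G := G) h1 l).toPath))).symm
          · exfalso
            rw [hc1] at h1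
            simp at h1
lemma cmp_nil {b : FreeST G} (S : CompHom G n (Ob.val b)) :
    cmp S (Quiver.Path.nil : b ⟶ b) = S := cmp_id S

lemma lemM (hc : filtInclS G n k ≫ v = CategoryTheory.Functor.whiskerLeft (Jfree G) u)
    (x : SimplexCategoryᵒᵖ) {b b' : FreeST G} (ψ : b ⟶ b')
    (S : CompHom G n (Ob.val b)) (hS : S ∈ sFilt G n (k+1) (Ob.val b))
    (hT : cmp S ψ ∈ sFilt G n (k+1) (Ob.val b')) :
    Xmap X x ψ (vvv k X v x b S hS) = vvv k X v x b' (cmp S ψ) hT := by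
  change @Quiver.Path (FreeOb G) _ _ _ at ψ
  cases ψ with
  | nil =>
    refine Eq.trans (Xmap_nil X x _) ?_
    exact vvv_congr k X v x b (cmp_nil S).symm hS hT
  | @cons mid _ χ e =>
    rcases arr_cases e with ⟨β, rfl⟩ | ⟨hb, h1, l, he⟩
    · -- last arrow is a generator
      have hU : cmp S χ ∈ Filt G n k (Ob.val mid) := by
        apply nodeChar k β ⟨0, (Ob.val b').pos⟩ (cmp S χ)
        exact hT ⟨0, (Ob.val b').pos⟩
      have hTF : cmp S (pcons χ (Arr.gen β)) ∈ Filt G n k (Ob.val b') :=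
        Filt.closed G n k hU ((genHom (a := mid) (b := b') β).toPath)
      refine Eq.trans (Xmap_comp X x χ ((genHom (a := mid) (b := b') β).toPath)
        (vvv k X v x b S hS)) ?_
      rw [lemV k X u v hc (plen χ) x χ (Nat.le_refl _) S hS hU]
      refine Eq.trans (uuu_natD k X u x ((genHom (a := mid) (b := b') β).toPath)
        (cmp S χ) hU _ hTF (cmp_comp S χ ((genHom (a := mid) (b := b') β).toPath))).symm ?_
      exact (compat k X u v hc x _ _ hTF hT).symm
    · -- last arrow is a projection
      have hb' : _ = FreeST.of G 1 := Ob.ext hb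
      subst hb'
      have he' : e = Arr.proj h1 l := eq_of_heq he
      subst he'
      cases χ with
      | nil => exact (vvv_proj k X v x h1 l S hS _ hT rfl).symm
      | @cons d _ χ₁ f =>
        rcases arr_cases f with ⟨γ, rfl⟩ | ⟨hc1, hf1, l₁, hef⟩
        · have hU : cmp S χ₁ ∈ Filt G n k (Ob.val d) := by
            apply nodeChar k γ l (cmp S χ₁)
            exact hT ⟨0, Nat.one_pos⟩
          have hTF : cmp S (pcons (pcons χ₁ (Arr.gen γ)) (Arr.proj h1 l))
              ∈ Filt G n k (Ob.val (FreeST.of G 1)) :=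
            Filt.closed G n k hU
              ((genHom (a := d) (b := mid) γ).toPath ≫ (projHom (G := G) h1 l).toPath)
          refine Eq.trans (Xmap_comp X x χ₁
            ((genHom (a := d) (b := mid) γ).toPath ≫ (projHom (G := G) h1 l).toPath)
            (vvv k X v x b S hS)) ?_
          rw [lemV k X u v hc (plen χ₁) x χ₁ (Nat.le_refl _) S hS hU]
          refine Eq.trans (uuu_natD k X u x
            ((genHom (a := d) (b := mid) γ).toPath ≫ (projHom (G := G) h1 l).toPath)
            (cmp S χ₁) hU _ hTF (cmp_comp S χ₁
              ((genHom (a := d) (b := mid) γ).toPath ≫ (projHom (G := G) h1 l).toPath))).symm ?_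
          exact (compat k X u v hc x _ _ hTF hT).symm
        · exfalso
          rw [hc1] at h1
          simp at h1

lemma lemL_viaM (hc : filtInclS G n k ≫ v = CategoryTheory.Functor.whiskerLeft (Jfree G) u)
    (x : SimplexCategoryᵒᵖ) {b₁ b₂ b : FreeST G} (ψ : b₁ ⟶ b) (ψ' : b₂ ⟶ b)
    (S : CompHom G n (Ob.val b₁)) (hS : S ∈ sFilt G n (k+1) (Ob.val b₁))
    (S' : CompHom G n (Ob.val b₂)) (hS' : S' ∈ sFilt G n (k+1) (Ob.val b₂))
    (heq : cmp S ψ = cmp S' ψ') (hT : cmp S ψ ∈ sFilt G n (k+1) (Ob.val b)) :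
    Xmap X x ψ (vvv k X v x b₁ S hS) = Xmap X x ψ' (vvv k X v x b₂ S' hS') := by
  have hT' : cmp S' ψ' ∈ sFilt G n (k+1) (Ob.val b) := heq ▸ hT
  rw [lemM k X u v hc x ψ S hS hT, lemM k X u v hc x ψ' S' hS' hT']
  exact vvv_congr k X v x b heq hT hT'

def Bform {b₁ : FreeST G} (ψ : b₁ ⟶ FreeST.of G 1) (S : CompHom G n (Ob.val b₁)) : Prop :=
  ∃ (d mid2 : FreeST G) (pre : b₁ ⟶ d) (γ : G.gen (Ob.val d) (Ob.val mid2))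
    (jj : Fin (Ob.val mid2)),
    ψ = pre ≫ ((genHom (a := d) (b := mid2) γ).toPath ≫ projPath G (Ob.val mid2) jj)
    ∧ plen pre + 1 ≤ plen ψ
    ∧ cmp S ψ = fun _ : Fin 1 => CTree.node γ jj (cmp S pre)

lemma gen_side {b₁ mid : FreeST G} (χ : b₁ ⟶ mid)
    (β : G.gen (Ob.val mid) (Ob.val (FreeST.of G 1))) (S : CompHom G n (Ob.val b₁)) :
    Bform (pcons χ (Arr.gen β)) S := by
  refine ⟨mid, FreeST.of G 1, χ, β, ⟨0, Nat.one_pos⟩, ?_, Nat.le_refl _, ?_⟩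
  · simp only [projPath]
    rw [dif_neg (show ¬ (1:ℕ) < ((Ob.val (FreeST.of G 1) : ℕ+) : ℕ) from by
      change ¬ (1:ℕ) < ((1:ℕ+):ℕ); simp)]
    rfl
  · funext j
    have hj : j = ⟨0, Nat.one_pos⟩ := Fin.ext (Nat.lt_one_iff.mp j.isLt)
    rw [hj]
    rfl

lemma proj_side (k : ℕ) {b₁ mid : FreeST G} (χ : b₁ ⟶ mid) (h1 : 1 < ((Ob.val mid) : ℕ))
    (l : Fin (Ob.val mid)) (S : CompHom G n (Ob.val b₁))
    (hS : S ∈ sFilt G n (k+1) (Ob.val b₁)) :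
    (cmp S (pcons χ (Arr.proj h1 l)) ∈ sFilt G n (k+1) 1) ∨ Bform (pcons χ (Arr.proj h1 l)) S := by
  change @Quiver.Path (FreeOb G) _ _ _ at χ
  cases χ with
  | nil =>
    left
    intro j
    exact hS l
  | @cons d _ χ₁ f =>
    rcases arr_cases f with ⟨γ, rfl⟩ | ⟨hc1, hf1, l₁, hef⟩
    · right
      refine ⟨d, mid, χ₁, γ, l, ?_, Nat.le_succ _, rfl⟩
      simp only [projPath]
      rw [dif_pos h1]
      rfl
    · exfalso
      rw [hc1] at h1
      simp at h1

lemma matchBB (hc : filtInclS G n k ≫ v = CategoryTheory.Functor.whiskerLeft (Jfree G) u) (N : ℕ)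
    (ihN : ∀ (x : SimplexCategoryᵒᵖ) {b₁ b₂ b : FreeST G} (ψ : b₁ ⟶ b) (ψ' : b₂ ⟶ b),
      plen ψ + plen ψ' ≤ N →
      ∀ (S : CompHom G n (Ob.val b₁)) (hS : S ∈ sFilt G n (k+1) (Ob.val b₁))
        (S' : CompHom G n (Ob.val b₂)) (hS' : S' ∈ sFilt G n (k+1) (Ob.val b₂)),
        cmp S ψ = cmp S' ψ' →
        Xmap X x ψ (vvv k X v x b₁ S hS) = Xmap X x ψ' (vvv k X v x b₂ S' hS'))
    (x : SimplexCategoryᵒᵖ) {b₁ b₂ : FreeST G}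
    (ψ : b₁ ⟶ FreeST.of G 1) (ψ' : b₂ ⟶ FreeST.of G 1)
    (hlen : plen ψ + plen ψ' ≤ N + 1)
    (S : CompHom G n (Ob.val b₁)) (hS : S ∈ sFilt G n (k+1) (Ob.val b₁))
    (S' : CompHom G n (Ob.val b₂)) (hS' : S' ∈ sFilt G n (k+1) (Ob.val b₂))
    (heq : cmp S ψ = cmp S' ψ') (HB : Bform ψ S) (HB' : Bform ψ' S') :
    Xmap X x ψ (vvv k X v x b₁ S hS) = Xmap X x ψ' (vvv k X v x b₂ S' hS') := by
  obtain ⟨d, mid2, pre, γ, jj, hψ, hlen1, hcomp⟩ := HB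
  obtain ⟨d', mid2', pre', γ', jj', hψ', hlen1', hcomp'⟩ := HB'
  have hnode : CTree.node γ jj (cmp S pre) = CTree.node γ' jj' (cmp S' pre') := by
    have h0 := congrFun (hcomp.symm.trans (heq.trans hcomp')) ⟨0, Nat.one_pos⟩
    exact h0
  injection hnode with hm hr hγ hjj hts
  have hd : d = d' := Ob.ext hm
  subst hd
  have hmid : mid2 = mid2' := Ob.ext hr
  subst hmid
  have hγ2 : γ = γ' := eq_of_heq hγ
  subst hγ2
  have hjj2 : jj = jj' := eq_of_heq hjj
  subst hjj2
  have hts2 : cmp S pre = cmp S' pre' := eq_of_heq hts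
  have hlen2 : plen pre + plen pre' ≤ N := by omega
  have hrec := ihN x pre pre' hlen2 S hS S' hS' hts2
  rw [hψ, hψ']
  rw [Xmap_comp X x pre ((genHom (a := d) (b := mid2) γ).toPath ≫ projPath G (Ob.val mid2) jj)]
  rw [Xmap_comp X x pre' ((genHom (a := d) (b := mid2) γ).toPath ≫ projPath G (Ob.val mid2) jj)]
  rw [hrec]

lemma lemL (hc : filtInclS G n k ≫ v = CategoryTheory.Functor.whiskerLeft (Jfree G) u) :
    ∀ (N : ℕ) (x : SimplexCategoryᵒᵖ) {b₁ b₂ b : FreeST G} (ψ : b₁ ⟶ b) (ψ' : b₂ ⟶ b),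
      plen ψ + plen ψ' ≤ N →
      ∀ (S : CompHom G n (Ob.val b₁)) (hS : S ∈ sFilt G n (k+1) (Ob.val b₁))
        (S' : CompHom G n (Ob.val b₂)) (hS' : S' ∈ sFilt G n (k+1) (Ob.val b₂)),
        cmp S ψ = cmp S' ψ' →
        Xmap X x ψ (vvv k X v x b₁ S hS) = Xmap X x ψ' (vvv k X v x b₂ S' hS') := by
  intro N
  induction N with
  | zero =>
    intro x b₁ b₂ b ψ ψ' hlen S hS S' hS' heq
    change @Quiver.Path (FreeOb G) _ _ _ at ψ
    cases ψ with
    | nil =>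
      exact lemL_viaM k X u v hc x _ ψ' S hS S' hS' heq
        (by exact (congrArg (fun T => T ∈ sFilt G n (k+1) _) (cmp_nil S)).mpr hS)
    | cons χ e =>
      have h2 : plen χ + 1 + plen ψ' ≤ 0 := hlen
      omega
  | succ N ihN =>
    intro x b₁ b₂ b ψ ψ' hlen S hS S' hS' heq
    change @Quiver.Path (FreeOb G) _ _ _ at ψ
    cases ψ with
    | nil =>
      exact lemL_viaM k X u v hc x _ ψ' S hS S' hS' heq
        (by exact (congrArg (fun T => T ∈ sFilt G n (k+1) _) (cmp_nil S)).mpr hS)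
    | @cons mid _ χ e =>
      change @Quiver.Path (FreeOb G) _ _ _ at ψ'
      cases ψ' with
      | nil =>
        exact (lemL_viaM k X u v hc x _ (pcons χ e) S' hS' S hS heq.symm
          (by exact (congrArg (fun T => T ∈ sFilt G n (k+1) _) (cmp_nil S')).mpr hS')).symm
      | @cons mid' _ χ' e' =>
        rcases arr_cases e with ⟨β, rfl⟩ | ⟨hb, h1, l, he⟩
        · rcases arr_cases e' with ⟨β', rfl⟩ | ⟨hb', h1', l', he'⟩
          · -- gen-gen
            have hnode : CTree.node β ⟨0, (Ob.val b).pos⟩ (cmp S χ)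
                = CTree.node β' ⟨0, (Ob.val b).pos⟩ (cmp S' χ') :=
              congrFun heq ⟨0, (Ob.val b).pos⟩
            injection hnode with hm hr hβ hi hts
            have hmid : mid = mid' := Ob.ext hm
            subst hmid
            have hβ2 : β = β' := eq_of_heq hβ
            subst hβ2
            have hts2 : cmp S χ = cmp S' χ' := eq_of_heq hts
            have hlen2 : plen χ + plen χ' ≤ N := by
              have h2 : plen χ + 1 + (plen χ' + 1) ≤ N + 1 := hlen
              omega
            have hrec := ihN x χ χ' hlen2 S hS S' hS' hts2
            refine Eq.trans (Xmap_comp X x χ ((genHom (a := mid) (b := b) β).toPath)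
              (vvv k X v x b₁ S hS)) ?_
            rw [hrec]
            exact (Xmap_comp X x χ' ((genHom (a := mid) (b := b) β).toPath)
              (vvv k X v x b₂ S' hS')).symm
          · -- gen-proj
            have hb2 : _ = FreeST.of G 1 := Ob.ext hb'
            subst hb2
            have he2 : e' = Arr.proj h1' l' := eq_of_heq he'
            subst he2
            rcases proj_side k χ' h1' l' S' hS' with hA' | hB'
            · exact (lemL_viaM k X u v hc x _ (pcons χ (Arr.gen β)) S' hS' S hS heq.symm hA').symm
            · exact matchBB k X u v hc N (fun x => ihN x) x _ _ hlen S hS S' hS' heq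
                (gen_side χ β S) hB'
        · -- e is a projection
          have hb2 : _ = FreeST.of G 1 := Ob.ext hb
          subst hb2
          have he2 : e = Arr.proj h1 l := eq_of_heq he
          subst he2
          rcases proj_side k χ h1 l S hS with hA | hB
          · exact lemL_viaM k X u v hc x _ (pcons χ' e') S hS S' hS' heq hA
          · rcases arr_cases e' with ⟨β', rfl⟩ | ⟨hb', h1', l', he'⟩
            · exact matchBB k X u v hc N (fun x => ihN x) x _ _ hlen S hS S' hS' heq
                hB (gen_side χ' β' S')
            · have he2' : e' = Arr.proj h1' l' := eq_of_heq he'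
              subst he2'
              rcases proj_side k χ' h1' l' S' hS' with hA' | hB'
              · exact (lemL_viaM k X u v hc x _ (pcons χ (Arr.proj h1 l)) S' hS' S hS
                  heq.symm hA').symm
              · exact matchBB k X u v hc N (fun x => ihN x) x _ _ hlen S hS S' hS' heq hB hB'

lemma filt_decomp {m : FreeST G} (T : CompHom G n (Ob.val m))
    (hT : T ∈ Filt G n (k+1) (Ob.val m)) :
    ∃ (b₁ : FreeST G) (S : CompHom G n (Ob.val b₁)) (ψ : b₁ ⟶ m),
      S ∈ sFilt G n (k+1) (Ob.val b₁) ∧ T = cmp S ψ := by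
  obtain ⟨m', S, ψ, h1, h2⟩ := hT
  exact ⟨FreeST.of G m', S, ψ, h1, h2⟩

noncomputable def wFun (x : SimplexCategoryᵒᵖ) (m : FreeST G)
    (T : {T : CompHom G n (Ob.val m) // T ∈ Filt G n (k+1) (Ob.val m)}) : (X.obj m).obj x :=
  Xmap X x (filt_decomp k T.1 T.2).choose_spec.choose_spec.choose
    (vvv k X v x (filt_decomp k T.1 T.2).choose (filt_decomp k T.1 T.2).choose_spec.choose
      (filt_decomp k T.1 T.2).choose_spec.choose_spec.choose_spec.1)

lemma wFun_eq (hc : filtInclS G n k ≫ v = CategoryTheory.Functor.whiskerLeft (Jfree G) u)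
    (x : SimplexCategoryᵒᵖ) (m : FreeST G)
    (T : {T : CompHom G n (Ob.val m) // T ∈ Filt G n (k+1) (Ob.val m)})
    {b₁ : FreeST G} (S : CompHom G n (Ob.val b₁)) (hS : S ∈ sFilt G n (k+1) (Ob.val b₁))
    (ψ : b₁ ⟶ m) (hdec : T.1 = cmp S ψ) :
    wFun k X v x m T = Xmap X x ψ (vvv k X v x b₁ S hS) := by
  unfold wFun
  exact lemL k X u v hc
    (plen (filt_decomp k T.1 T.2).choose_spec.choose_spec.choose + plen ψ) x
    (filt_decomp k T.1 T.2).choose_spec.choose_spec.choose ψ (Nat.le_refl _)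
    (filt_decomp k T.1 T.2).choose_spec.choose
    (filt_decomp k T.1 T.2).choose_spec.choose_spec.choose_spec.1
    S hS
    ((filt_decomp k T.1 T.2).choose_spec.choose_spec.choose_spec.2.symm.trans hdec)

lemma Xmap_id (x : SimplexCategoryᵒᵖ) {b : FreeST G} (t : (X.obj b).obj x) :
    Xmap X x (𝟙 b) t = t := Xmap_nil X x t

lemma vvv_xnat {x x' : SimplexCategoryᵒᵖ} (θ : x ⟶ x') (b : FreeST G)
    (S : CompHom G n (Ob.val b)) (hS : S ∈ sFilt G n (k+1) (Ob.val b)) :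
    vvv k X v x' b S hS = ((X.obj b)).map θ (vvv k X v x b S hS) :=
  types_congr_hom ((v.app b).naturality θ) ⟨S, hS⟩

lemma Xmap_xnat {x x' : SimplexCategoryᵒᵖ} (θ : x ⟶ x') {b b' : FreeST G} (ψ : b ⟶ b')
    (t : (X.obj b).obj x) :
    Xmap X x' ψ ((X.obj b).map θ t) = (X.obj b').map θ (Xmap X x ψ t) :=
  types_congr_hom ((X.map ψ).naturality θ) t

noncomputable def wNat (hc : filtInclS G n k ≫ v = CategoryTheory.Functor.whiskerLeft (Jfree G) u) :
    FiltDiag G n (k+1) ⟶ X where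
  app m :=
    { app := fun x => TypeCat.ofHom fun T => wFun k X v x m T
      naturality := fun {x x'} θ => by
        apply ConcreteCategory.hom_ext; intro T
        show wFun k X v x' m T = (X.obj m).map θ (wFun k X v x m T)
        unfold wFun
        rw [vvv_xnat k X v θ]
        exact Xmap_xnat X θ _ _ }
  naturality := fun {a b} η => by
    apply NatTrans.ext
    funext x; apply ConcreteCategory.hom_ext; intro T
    show wFun k X v x b ⟨cmp T.1 η, Filt.closed G n (k+1) T.2 η⟩
      = (X.map η).app x (wFun k X v x a T)
    rw [wFun_eq k X u v hc x b _ (filt_decomp k T.1 T.2).choose_spec.choose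
      (filt_decomp k T.1 T.2).choose_spec.choose_spec.choose_spec.1
      ((filt_decomp k T.1 T.2).choose_spec.choose_spec.choose ≫ η)
      (by
        rw [cmp_comp, ← (filt_decomp k T.1 T.2).choose_spec.choose_spec.choose_spec.2])]
    exact Xmap_comp X x _ η _

end Main

end Exp



/-! ### STATEMENT 14
The square of sets of natural transformations induced by the inclusions
`D̄_n^k ⟶ D̄_n^{k+1}` (of `D`-diagrams) and `D̄_n^k ⟶ sD̄_n^{k+1} ⟶ D̄_n^{k+1}`
(of `P`-diagrams) is a pullback square of sets, for every `D`-diagram `X`. -/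
theorem hom_square_is_pullback (G : GenData) (n : ℕ+) (k : ℕ) (X : FreeST G ⥤ SSet) :
    (∀ w : FiltDiag G n (k+1) ⟶ X,
      filtInclS G n k ≫ (sFiltIncl G n k ≫ CategoryTheory.Functor.whiskerLeft (Jfree G) w)
        = CategoryTheory.Functor.whiskerLeft (Jfree G) (filtIncl G n k ≫ w)) ∧
    ∀ (u : FiltDiag G n k ⟶ X) (v : sFiltDiag G n (k+1) ⟶ resP G X),
      filtInclS G n k ≫ v = CategoryTheory.Functor.whiskerLeft (Jfree G) u →
      ∃! w : FiltDiag G n (k+1) ⟶ X,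
        filtIncl G n k ≫ w = u ∧
        sFiltIncl G n k ≫ CategoryTheory.Functor.whiskerLeft (Jfree G) w = v := by
  constructor
  · intro w
    rfl
  · intro u v hc
    refine ⟨wNat k X u v hc, ⟨?_, ?_⟩, ?_⟩
    · apply NatTrans.ext
      funext m
      apply NatTrans.ext
      funext x; apply ConcreteCategory.hom_ext; intro T
      show wFun k X v x m ⟨T.1, Filt.mono G n k (Ob.val m) T.2⟩ = (u.app m).app x T
      rw [wFun_eq k X u v hc x m _ T.1 (Filt.subset_sFilt G n k (Ob.val m) T.2) (𝟙 m)
        (cmp_id T.1).symm]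
      rw [Xmap_id]
      exact compat k X u v hc x m T.1 T.2 (Filt.subset_sFilt G n k (Ob.val m) T.2)
    · apply NatTrans.ext
      funext m
      apply NatTrans.ext
      funext x; apply ConcreteCategory.hom_ext; intro T
      show wFun k X v x ((Jfree G).obj m) ⟨T.1, sFilt.subset_Filt G n k (Ob.val m) T.2⟩
        = (v.app m).app x T
      rw [wFun_eq k X u v hc x ((Jfree G).obj m) _ T.1 T.2 (𝟙 _) (cmp_id T.1).symm]
      exact (Xmap_id X x _).trans rfl
    · intro w₂ hw₂
      obtain ⟨hw1, hw2⟩ := hw₂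
      apply NatTrans.ext
      funext m
      apply NatTrans.ext
      funext x; apply ConcreteCategory.hom_ext; intro T
      have hdecT := (filt_decomp k T.1 T.2).choose_spec.choose_spec.choose_spec.2
      have hScmem := (filt_decomp k T.1 T.2).choose_spec.choose_spec.choose_spec.1
      calc (w₂.app m).app x T
          = (w₂.app m).app x
              (((FiltDiag G n (k+1)).map (filt_decomp k T.1 T.2).choose_spec.choose_spec.choose).app x
                ⟨(filt_decomp k T.1 T.2).choose_spec.choose,
                  sFilt.subset_Filt G n k _ hScmem⟩) :=
            congrArg ((w₂.app m).app x) (Subtype.ext hdecT)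
        _ = (X.map (filt_decomp k T.1 T.2).choose_spec.choose_spec.choose).app x
              ((w₂.app (filt_decomp k T.1 T.2).choose).app x
                ⟨(filt_decomp k T.1 T.2).choose_spec.choose,
                  sFilt.subset_Filt G n k _ hScmem⟩) :=
            types_congr_hom (NatTrans.congr_app
              (w₂.naturality (filt_decomp k T.1 T.2).choose_spec.choose_spec.choose) x) _
        _ = wFun k X v x m T :=
            congrArg ((X.map (filt_decomp k T.1 T.2).choose_spec.choose_spec.choose).app x)
              (types_congr_hom (NatTrans.congr_app
                (NatTrans.congr_app hw2 (filt_decomp k T.1 T.2).choose) x) ⟨_, hScmem⟩)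


end SemiThPaper
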